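/- Let p = [b_1^{a_1} ⋯ b_r^{a_r}] (b_1 ≥ ⋯ ≥ b_r) be a symplectic partition of 2n. Then Σ_{i : b_i odd} a_i is even, so 2n* = Σ_{i : b_i odd} a_i; set P := [p_1 p_1 (2n*+1)] (the union of two copies of p_1 and one extra part 2n*+1), which is an orthogonal partition of 2n+1. Then P^{SO_{2n+1}} = ((p^+)_{SO_{2n+1}})^t if and only if (P^t)_{SO_{2n+1}} = (p^+)_{SO_{2n+1}}. -/

import Mathlib

namespace JiangWF

/-- `sCount p i` : the number of parts of `p` that are `≥ i`. -/
def sCount (p : Multiset ℕ) (i : ℕ) : ℕ := (p.filter (fun a => i ≤ a)).card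

/-- `rCount p i` : the number of parts of `p` equal to `i`. -/
def rCount (p : Multiset ℕ) (i : ℕ) : ℕ := p.count i

/-- The largest part of `p` (`0` for the empty partition). -/
def maxPart (p : Multiset ℕ) : ℕ := p.sup

/-- The smallest part of `p` (`0` for the empty partition). -/
noncomputable def minPart (p : Multiset ℕ) : ℕ := sInf {a : ℕ | a ∈ p}

/-- The transpose partition: its `i`-th part is `sCount p i`, for `1 ≤ i ≤ maxPart p`. -/
def transpose (p : Multiset ℕ) : Multiset ℕ :=
  (Multiset.range (maxPart p)).map fun i => sCount p (i + 1)

/-- The sum of the `m` largest parts of `p`. -/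
def topSum (p : Multiset ℕ) (m : ℕ) : ℕ :=
  ∑ i ∈ Finset.Icc 1 p.sum, min m (sCount p i)

/-- Dominance order: `domLE p q` means `p ≤ q`. -/
def domLE (p q : Multiset ℕ) : Prop := ∀ m, topSum p m ≤ topSum q m

/-- `p` is a partition of `N`: all parts positive, summing to `N`. -/
def IsPartitionOf (p : Multiset ℕ) (N : ℕ) : Prop := (∀ a ∈ p, 0 < a) ∧ p.sum = N

/-- Symplectic partition: every odd part occurs with even multiplicity. -/
def IsSymplectic (p : Multiset ℕ) : Prop := ∀ a, a % 2 = 1 → Even (p.count a)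

/-- Orthogonal partition: every even part occurs with even multiplicity. -/
def IsOrthogonal (p : Multiset ℕ) : Prop := ∀ a, a % 2 = 0 → Even (p.count a)

/-- `p^-`: decrease the smallest part by one (deleting it if it becomes `0`). -/
noncomputable def pMinus (p : Multiset ℕ) : Multiset ℕ :=
  if minPart p ≤ 1 then p.erase (minPart p)
  else (minPart p - 1) ::ₘ p.erase (minPart p)

/-- `p^+`: increase the largest part by one. -/
def pPlus (p : Multiset ℕ) : Multiset ℕ := (maxPart p + 1) ::ₘ p.erase (maxPart p)

/-- `p^{+-}`: increase the largest part by one and decrease the smallest by one. -/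
noncomputable def pPM (p : Multiset ℕ) : Multiset ℕ := pMinus (pPlus p)

/-- `p₁ = [⌊b_1/2⌋^{a_1} ⋯ ⌊b_r/2⌋^{a_r}]^t` (discarding zero entries before transposing). -/
def pOne (p : Multiset ℕ) : Multiset ℕ :=
  transpose ((p.map fun b => b / 2).filter fun x => 0 < x)

/-- `Σ_{i : b_i odd} a_i`: the number of odd parts of `p`. -/
def oddMult (p : Multiset ℕ) : ℕ := (p.filter fun a => a % 2 = 1).card

/-- `n* = ⌊(Σ_{i : b_i odd} a_i)/2⌋`. -/
def nStar (p : Multiset ℕ) : ℕ := oddMult p / 2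

/-- Append an extra part `m` to `q`, omitted if `m = 0`. -/
def addPart (m : ℕ) (q : Multiset ℕ) : Multiset ℕ := if m = 0 then q else m ::ₘ q

/-- `c` is the `Sp`-collapse of `p`: the maximal symplectic partition `≤ p` in dominance. -/
def IsSpCollapse (p c : Multiset ℕ) : Prop :=
  IsPartitionOf c p.sum ∧ IsSymplectic c ∧ domLE c p ∧
    ∀ c', IsPartitionOf c' p.sum → IsSymplectic c' → domLE c' p → domLE c' c

/-- `c` is the `SO`-collapse of `p`: the maximal orthogonal partition `≤ p` in dominance. -/
def IsSOCollapse (p c : Multiset ℕ) : Prop :=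
  IsPartitionOf c p.sum ∧ IsOrthogonal c ∧ domLE c p ∧
    ∀ c', IsPartitionOf c' p.sum → IsOrthogonal c' → domLE c' p → domLE c' c

/-- `e` is the `Sp`-expansion of `p`: the minimal special symplectic partition `≥ p`. -/
def IsSpExpansion (p e : Multiset ℕ) : Prop :=
  IsPartitionOf e p.sum ∧ IsSymplectic e ∧ IsSymplectic (transpose e) ∧ domLE p e ∧
    ∀ e', IsPartitionOf e' p.sum → IsSymplectic e' → IsSymplectic (transpose e') →
      domLE p e' → domLE e e'

/-- `e` is the `SO_{2n+1}`-expansion of `p`: the minimal special orthogonal partition `≥ p`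
(odd case: special means the transpose is orthogonal). -/
def IsSOOddExpansion (p e : Multiset ℕ) : Prop :=
  IsPartitionOf e p.sum ∧ IsOrthogonal e ∧ IsOrthogonal (transpose e) ∧ domLE p e ∧
    ∀ e', IsPartitionOf e' p.sum → IsOrthogonal e' → IsOrthogonal (transpose e') →
      domLE p e' → domLE e e'

/-- `e` is the `SO_{2n}`-expansion of `p`: the minimal special orthogonal partition `≥ p`
(even case: special means the transpose is symplectic). -/
def IsSOEvenExpansion (p e : Multiset ℕ) : Prop :=
  IsPartitionOf e p.sum ∧ IsOrthogonal e ∧ IsSymplectic (transpose e) ∧ domLE p e ∧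
    ∀ e', IsPartitionOf e' p.sum → IsOrthogonal e' → IsSymplectic (transpose e') →
      domLE p e' → domLE e e'

/-- `dim_C(q)` for a symplectic partition `q` of `2k`:
`2k² + k − (1/2)Σ s_i(q)² − (1/2)Σ_{i odd} r_i(q)` (note `2k² + k = (|q|² + |q|)/2`). -/
def dimC (p : Multiset ℕ) : ℚ :=
  ((p.sum : ℚ) ^ 2 + (p.sum : ℚ)) / 2
    - (∑ i ∈ Finset.Icc 1 p.sum, (sCount p i : ℚ) ^ 2) / 2
    - (∑ i ∈ Finset.Icc 1 p.sum, if i % 2 = 1 then (rCount p i : ℚ) else 0) / 2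

/-- `dim_B(q)` for an orthogonal partition `q` of `2k+1`:
`2k² + k − (1/2)Σ s_i(q)² + (1/2)Σ_{i odd} r_i(q)` (note `2k² + k = (|q|² − |q|)/2`). -/
def dimB (p : Multiset ℕ) : ℚ :=
  ((p.sum : ℚ) ^ 2 - (p.sum : ℚ)) / 2
    - (∑ i ∈ Finset.Icc 1 p.sum, (sCount p i : ℚ) ^ 2) / 2
    + (∑ i ∈ Finset.Icc 1 p.sum, if i % 2 = 1 then (rCount p i : ℚ) else 0) / 2

/-- `dim_D(q)` for an orthogonal partition `q` of `2k`:
`2k² − k − (1/2)Σ s_i(q)² + (1/2)Σ_{i odd} r_i(q)` (note `2k² − k = (|q|² − |q|)/2`). -/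
def dimD (p : Multiset ℕ) : ℚ :=
  ((p.sum : ℚ) ^ 2 - (p.sum : ℚ)) / 2
    - (∑ i ∈ Finset.Icc 1 p.sum, (sCount p i : ℚ) ^ 2) / 2
    + (∑ i ∈ Finset.Icc 1 p.sum, if i % 2 = 1 then (rCount p i : ℚ) else 0) / 2


-- B lemmas
lemma sCount_zero (i : ℕ) : sCount 0 i = 0 := rfl

lemma sCount_cons (a : ℕ) (s : Multiset ℕ) (i : ℕ) :
    sCount (a ::ₘ s) i = sCount s i + (if i ≤ a then 1 else 0) := by
  unfold sCount
  by_cases h : i ≤ a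
  · rw [Multiset.filter_cons_of_pos _ h, Multiset.card_cons]; simp [h]
  · rw [Multiset.filter_cons_of_neg _ h]; simp [h]

lemma sCount_add (s t : Multiset ℕ) (i : ℕ) :
    sCount (s + t) i = sCount s i + sCount t i := by
  unfold sCount; rw [Multiset.filter_add, Multiset.card_add]

lemma sCount_antitone {s : Multiset ℕ} {i j : ℕ} (h : i ≤ j) :
    sCount s j ≤ sCount s i := by
  apply Multiset.card_le_card
  apply Multiset.monotone_filter_right
  intro a ha; omega

lemma sCount_le_card (s : Multiset ℕ) (i : ℕ) : sCount s i ≤ Multiset.card s :=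
  Multiset.card_le_card (Multiset.filter_le _ s)

lemma count_add_sCount (s : Multiset ℕ) (i : ℕ) :
    s.count i + sCount s (i + 1) = sCount s i := by
  induction s using Multiset.induction with
  | empty => rfl
  | cons a t ih =>
    rw [Multiset.count_cons, sCount_cons, sCount_cons]
    have h1 : (if i = a then 1 else 0) + (if i+1 ≤ a then 1 else 0)
        = (if i ≤ a then (1:ℕ) else 0) := by
      split_ifs <;> omega
    omega

lemma sCount_pos_mem {s : Multiset ℕ} {i : ℕ} (h : 1 ≤ sCount s i) :
    ∃ a ∈ s, i ≤ a := by
  unfold sCount at h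
  have := Multiset.card_pos_iff_exists_mem.1 (by omega : 0 < (s.filter (fun a => i ≤ a)).card)
  obtain ⟨a, ha⟩ := this
  exact ⟨a, (Multiset.mem_filter.1 ha).1, (Multiset.mem_filter.1 ha).2⟩

lemma mem_le_sum {s : Multiset ℕ} {a : ℕ} (h : a ∈ s) : a ≤ s.sum :=
  Multiset.le_sum_of_mem h

lemma card_le_sum {s : Multiset ℕ} (h : ∀ a ∈ s, 0 < a) : Multiset.card s ≤ s.sum := by
  induction s using Multiset.induction with
  | empty => simp
  | cons a t ih =>
    rw [Multiset.card_cons, Multiset.sum_cons]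
    have h1 := h a (Multiset.mem_cons_self a t)
    have h2 := ih (fun b hb => h b (Multiset.mem_cons_of_mem hb))
    omega

lemma le_maxPart {s : Multiset ℕ} {a : ℕ} (h : a ∈ s) : a ≤ maxPart s :=
  Multiset.le_sup h

lemma maxPart_mem {s : Multiset ℕ} (h : s ≠ 0) : maxPart s ∈ s := by
  induction s using Multiset.induction with
  | empty => exact absurd rfl h
  | cons a t ih =>
    unfold maxPart at *
    rw [Multiset.sup_cons]
    rcases eq_or_ne t 0 with rfl | ht
    · simp
    · rcases le_total a t.sup with h1 | h1
      · rw [sup_eq_right.2 h1]; exact Multiset.mem_cons_of_mem (ih ht)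
      · rw [sup_eq_left.2 h1]; exact Multiset.mem_cons_self a t

lemma sCount_eq_zero_of_gt {s : Multiset ℕ} {i : ℕ} (h : maxPart s < i) :
    sCount s i = 0 := by
  unfold sCount
  rw [Multiset.card_eq_zero, Multiset.filter_eq_nil]
  intro a ha
  have := le_maxPart ha; omega



lemma card_Icc_filter_le (lo n a : ℕ) :
    ((Finset.Icc lo n).filter (fun i => i ≤ a)).card = min a n + 1 - lo := by
  have : (Finset.Icc lo n).filter (fun i => i ≤ a) = Finset.Icc lo (min a n) := by
    ext i; simp [Finset.mem_Icc, Finset.mem_filter]; omega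
  rw [this, Nat.card_Icc]

lemma sum_ite_le (F : Finset ℕ) (a : ℕ) :
    (∑ i ∈ F, if i ≤ a then (1:ℕ) else 0) = (F.filter (fun i => i ≤ a)).card := by
  rw [Finset.card_filter]

lemma sum_sCount (s : Multiset ℕ) (F : Finset ℕ) :
    (∑ i ∈ F, sCount s i) = (s.map (fun a => (F.filter (fun i => i ≤ a)).card)).sum := by
  induction s using Multiset.induction with
  | empty => simp [sCount_zero]
  | cons a t ih =>
    simp only [Multiset.map_cons, Multiset.sum_cons, sCount_cons, Finset.sum_add_distrib, ih,
      sum_ite_le]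
    omega

lemma sum_sCount_Icc (s : Multiset ℕ) (n : ℕ) :
    (∑ i ∈ Finset.Icc 1 n, sCount s i) = (s.map (fun a => min a n)).sum := by
  rw [sum_sCount]
  congr 1
  apply Multiset.map_congr rfl
  intro a _
  rw [card_Icc_filter_le]; omega

lemma sum_sCount_Icc2 {s : Multiset ℕ} {N : ℕ} (hN : ∀ a ∈ s, a ≤ N) (m : ℕ) :
    (∑ i ∈ Finset.Icc (m+1) N, sCount s i) = (s.map (fun a => a - m)).sum := by
  rw [sum_sCount]
  congr 1
  apply Multiset.map_congr rfl
  intro a ha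
  rw [card_Icc_filter_le]
  have := hN a ha; omega

lemma map_min_add_map_sub (s : Multiset ℕ) (k : ℕ) :
    (s.map (fun a => min a k)).sum + (s.map (fun a => a - k)).sum = s.sum := by
  induction s using Multiset.induction with
  | empty => simp
  | cons a t ih => simp only [Multiset.map_cons, Multiset.sum_cons]; omega



lemma sCount_transpose_card (q : Multiset ℕ) (v : ℕ) :
    sCount (transpose q) v
      = ((Finset.range (maxPart q)).filter (fun j => v ≤ sCount q (j+1))).card := by
  unfold sCount transpose
  rw [← Multiset.countP_eq_card_filter, Multiset.countP_map]
  rfl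

lemma galois {q : Multiset ℕ} {i v : ℕ} (hi : 1 ≤ i) (hv : 1 ≤ v) :
    i ≤ sCount (transpose q) v ↔ v ≤ sCount q i := by
  rw [sCount_transpose_card]
  constructor
  · intro h
    by_contra hc
    push_neg at hc
    have hsub : (Finset.range (maxPart q)).filter (fun j => v ≤ sCount q (j+1))
        ⊆ Finset.range (i-1) := by
      intro j hj
      rw [Finset.mem_filter] at hj
      rw [Finset.mem_range]
      by_contra hji
      push_neg at hji
      have : sCount q (j+1) ≤ sCount q i := sCount_antitone (by omega)
      omega
    have := Finset.card_le_card hsub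
    rw [Finset.card_range] at this
    omega
  · intro h
    have hiM : i ≤ maxPart q := by
      obtain ⟨a, ha, hia⟩ := sCount_pos_mem (le_trans hv h)
      exact le_trans hia (le_maxPart ha)
    have hsub : Finset.range i ⊆
        (Finset.range (maxPart q)).filter (fun j => v ≤ sCount q (j+1)) := by
      intro j hj
      rw [Finset.mem_range] at hj
      rw [Finset.mem_filter, Finset.mem_range]
      refine ⟨by omega, le_trans ?_ (sCount_antitone (by omega : j+1 ≤ i))⟩
      exact h
    have := Finset.card_le_card hsub
    rw [Finset.card_range] at this
    omega



lemma transpose_pos {q : Multiset ℕ} : ∀ b ∈ transpose q, 0 < b := by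
  intro b hb
  unfold transpose at hb
  rw [Multiset.mem_map] at hb
  obtain ⟨j, hj, rfl⟩ := hb
  rw [Multiset.mem_range] at hj
  have hq : q ≠ 0 := by
    intro h; rw [h] at hj; simp [maxPart] at hj
  have hm : maxPart q ∈ q := maxPart_mem hq
  have : 1 ≤ sCount q (j+1) := by
    unfold sCount
    rw [Nat.succ_le_iff, Multiset.card_pos_iff_exists_mem]
    exact ⟨maxPart q, Multiset.mem_filter.2 ⟨hm, by omega⟩⟩
  omega

lemma sum_Icc_one (M : ℕ) (f : ℕ → ℕ) :
    (∑ i ∈ Finset.Icc 1 M, f i) = ∑ j ∈ Finset.range M, f (j+1) := by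
  induction M with
  | zero => simp
  | succ n ih =>
    rw [Finset.sum_range_succ, ← ih, Finset.sum_Icc_succ_top (by omega : 1 ≤ n+1)]

lemma transpose_sum (q : Multiset ℕ) : (transpose q).sum = q.sum := by
  have h1 : (transpose q).sum = ∑ j ∈ Finset.range (maxPart q), sCount q (j+1) := rfl
  rw [h1, ← sum_Icc_one, sum_sCount_Icc]
  have : q.map (fun a => min a (maxPart q)) = q.map id := by
    apply Multiset.map_congr rfl
    intro a ha
    simp [min_eq_left (le_maxPart ha)]
  rw [this, Multiset.map_id]

lemma sCount_transpose_transpose {q : Multiset ℕ} {i : ℕ} (hi : 1 ≤ i) :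
    sCount (transpose (transpose q)) i = sCount q i := by
  apply Nat.le_antisymm
  · rcases Nat.eq_zero_or_pos (sCount (transpose (transpose q)) i) with h | h
    · omega
    · have h2 : i ≤ sCount (transpose q) (sCount (transpose (transpose q)) i) :=
        (galois h hi).1 (le_refl _)
      exact (galois hi h).1 h2
  · rcases Nat.eq_zero_or_pos (sCount q i) with h | h
    · omega
    · have h2 : i ≤ sCount (transpose q) (sCount q i) := (galois hi h).2 (le_refl _)
      exact (galois h hi).2 h2

lemma eq_of_sCount_eq {s s' : Multiset ℕ} (hs : ∀ a ∈ s, 0 < a) (hs' : ∀ a ∈ s', 0 < a)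
    (h : ∀ i, 1 ≤ i → sCount s i = sCount s' i) : s = s' := by
  ext a
  rcases Nat.eq_zero_or_pos a with rfl | ha
  · rw [Multiset.count_eq_zero.2 (fun hm => by have := hs 0 hm; omega),
      Multiset.count_eq_zero.2 (fun hm => by have := hs' 0 hm; omega)]
  · have e1 := count_add_sCount s a
    have e2 := count_add_sCount s' a
    have e3 := h a ha
    have e4 := h (a+1) (by omega)
    omega

lemma transpose_transpose {q : Multiset ℕ} (hq : ∀ a ∈ q, 0 < a) :
    transpose (transpose q) = q :=
  eq_of_sCount_eq transpose_pos hq (fun _ hi => sCount_transpose_transpose hi)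



lemma maxPart_le_sum {s : Multiset ℕ} : maxPart s ≤ s.sum := by
  rcases eq_or_ne s 0 with rfl | h
  · simp [maxPart]
  · exact mem_le_sum (maxPart_mem h)

lemma Icc_one_eq_Ioc (x : ℕ) : Finset.Icc 1 x = Finset.Ioc 0 x := by
  ext i; simp [Finset.mem_Icc, Finset.mem_Ioc]; omega

lemma topSum_eq_sum_sCount_transpose (s : Multiset ℕ) (k : ℕ) :
    topSum s k = ∑ i ∈ Finset.Icc 1 k, sCount (transpose s) i := by
  have h1 : ∑ i ∈ Finset.Icc 1 k, sCount (transpose s) i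
      = ∑ i ∈ Finset.Icc 1 (maxPart s), min k (sCount s i) := by
    rw [sum_sCount_Icc, sum_Icc_one]
    unfold transpose
    rw [Multiset.map_map]
    have : ((Multiset.range (maxPart s)).map
        ((fun a => min a k) ∘ fun i => sCount s (i + 1))).sum
        = ∑ j ∈ Finset.range (maxPart s), min (sCount s (j+1)) k := rfl
    rw [this]
    apply Finset.sum_congr rfl
    intro j _
    rw [Nat.min_comm]
  rw [h1]
  unfold topSum
  rw [Icc_one_eq_Ioc, Icc_one_eq_Ioc]
  rw [← Finset.sum_Ioc_consecutive _ (Nat.zero_le (maxPart s)) maxPart_le_sum]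
  have h2 : ∑ i ∈ Finset.Ioc (maxPart s) s.sum, min k (sCount s i) = 0 := by
    apply Finset.sum_eq_zero
    intro i hi
    rw [Finset.mem_Ioc] at hi
    rw [sCount_eq_zero_of_gt hi.1]
    simp
  omega

lemma topSum_succ (s : Multiset ℕ) {k : ℕ} (hk : 1 ≤ k) :
    topSum s k = topSum s (k-1) + sCount (transpose s) k := by
  obtain ⟨k', rfl⟩ : ∃ k', k = k' + 1 := ⟨k-1, by omega⟩
  rw [topSum_eq_sum_sCount_transpose, topSum_eq_sum_sCount_transpose,
    Finset.sum_Icc_succ_top (by omega : 1 ≤ k' + 1)]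
  simp

lemma topSum_transpose {s : Multiset ℕ} (hs : ∀ a ∈ s, 0 < a) (k : ℕ) :
    topSum (transpose s) k = (s.map (fun a => min a k)).sum := by
  rw [topSum_eq_sum_sCount_transpose, ← sum_sCount_Icc]
  apply Finset.sum_congr rfl
  intro i hi
  rw [Finset.mem_Icc] at hi
  rw [sCount_transpose_transpose hi.1]

lemma topSum_le_bound (s : Multiset ℕ) (k m : ℕ) :
    topSum s k ≤ k * m + (s.map (fun a => a - m)).sum := by
  unfold topSum
  have hle : ∀ i ∈ Finset.Icc 1 s.sum, min k (sCount s i)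
      ≤ (if i ≤ m then k else 0) + (if m+1 ≤ i then sCount s i else 0) := by
    intro i _
    have h1 := Nat.min_le_left k (sCount s i)
    have h2 := Nat.min_le_right k (sCount s i)
    split_ifs <;> omega
  refine le_trans (Finset.sum_le_sum hle) ?_
  rw [Finset.sum_add_distrib]
  have e1 : (∑ i ∈ Finset.Icc 1 s.sum, if i ≤ m then k else 0)
      = ((Finset.Icc 1 s.sum).filter (fun i => i ≤ m)).card * k := by
    rw [← Finset.sum_filter, Finset.sum_const, smul_eq_mul]
  have e2 : (∑ i ∈ Finset.Icc 1 s.sum, if m+1 ≤ i then sCount s i else 0)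
      = ∑ i ∈ Finset.Icc (m+1) s.sum, sCount s i := by
    rw [← Finset.sum_filter]
    apply Finset.sum_congr _ (fun _ _ => rfl)
    ext i; simp [Finset.mem_Icc, Finset.mem_filter]; omega
  rw [e1, e2, card_Icc_filter_le, sum_sCount_Icc2 (fun a ha => mem_le_sum ha) m]
  have : min m s.sum + 1 - 1 ≤ m := by omega
  calc (min m s.sum + 1 - 1) * k + (s.map (fun a => a - m)).sum
      ≤ m * k + (s.map (fun a => a - m)).sum := by
        have := Nat.mul_le_mul_right k this; omega
    _ = k * m + (s.map (fun a => a - m)).sum := by rw [Nat.mul_comm]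

lemma topSum_sCount_eq (s : Multiset ℕ) {m : ℕ} (hm : m ≤ s.sum) :
    topSum s (sCount s (m+1)) = sCount s (m+1) * m + (s.map (fun a => a - m)).sum := by
  unfold topSum
  have heq : ∀ i ∈ Finset.Icc 1 s.sum, min (sCount s (m+1)) (sCount s i)
      = (if i ≤ m then sCount s (m+1) else 0) + (if m+1 ≤ i then sCount s i else 0) := by
    intro i hi
    rw [Finset.mem_Icc] at hi
    by_cases h : i ≤ m
    · have h3 : sCount s (m+1) ≤ sCount s i := sCount_antitone (by omega)
      rw [Nat.min_eq_left h3, if_pos h, if_neg (by omega : ¬ m+1 ≤ i)]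
      omega
    · have h' : m + 1 ≤ i := by omega
      have h3 : sCount s i ≤ sCount s (m+1) := sCount_antitone h'
      rw [Nat.min_eq_right h3, if_neg h, if_pos h']
      omega
  rw [Finset.sum_congr rfl heq, Finset.sum_add_distrib]
  have e1 : (∑ i ∈ Finset.Icc 1 s.sum, if i ≤ m then sCount s (m+1) else 0)
      = ((Finset.Icc 1 s.sum).filter (fun i => i ≤ m)).card * sCount s (m+1) := by
    rw [← Finset.sum_filter, Finset.sum_const, smul_eq_mul]
  have e2 : (∑ i ∈ Finset.Icc 1 s.sum, if m+1 ≤ i then sCount s i else 0)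
      = ∑ i ∈ Finset.Icc (m+1) s.sum, sCount s i := by
    rw [← Finset.sum_filter]
    apply Finset.sum_congr _ (fun _ _ => rfl)
    ext i; simp [Finset.mem_Icc, Finset.mem_filter]; omega
  rw [e1, e2, card_Icc_filter_le, sum_sCount_Icc2 (fun a ha => mem_le_sum ha) m]
  have hmin : min m s.sum = m := by omega
  rw [hmin, Nat.add_sub_cancel, Nat.mul_comm]

lemma tail_mono {s s' : Multiset ℕ} (hsum : s.sum = s'.sum)
    (h : domLE s s') (m : ℕ) :
    (s.map (fun a => a - m)).sum ≤ (s'.map (fun a => a - m)).sum := by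
  rcases le_or_gt m s.sum with hm | hm
  · have e1 := topSum_sCount_eq s hm
    have e2 := topSum_le_bound s' (sCount s (m+1)) m
    have e3 := h (sCount s (m+1))
    omega
  · have : (s.map (fun a => a - m)).sum = 0 := by
      rw [Multiset.sum_eq_zero]
      intro x hx
      rw [Multiset.mem_map] at hx
      obtain ⟨a, ha, rfl⟩ := hx
      have := mem_le_sum ha; omega
    omega

lemma domLE_transpose {s s' : Multiset ℕ} (hs : ∀ a ∈ s, 0 < a) (hs' : ∀ a ∈ s', 0 < a)
    (hsum : s.sum = s'.sum) (h : domLE s s') : domLE (transpose s') (transpose s) := by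
  intro k
  rw [topSum_transpose hs k, topSum_transpose hs' k]
  have h1 := map_min_add_map_sub s k
  have h2 := map_min_add_map_sub s' k
  have h3 := tail_mono hsum h k
  omega

lemma domLE_antisymm {s s' : Multiset ℕ} (hs : ∀ a ∈ s, 0 < a) (hs' : ∀ a ∈ s', 0 < a)
    (hsum : s.sum = s'.sum) (h : domLE s s') (h' : domLE s' s) : s = s' := by
  have hA : ∀ m, (∑ i ∈ Finset.Icc 1 m, sCount s i) = ∑ i ∈ Finset.Icc 1 m, sCount s' i := by
    intro m
    rw [sum_sCount_Icc, sum_sCount_Icc]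
    have h1 := map_min_add_map_sub s m
    have h2 := map_min_add_map_sub s' m
    have h3 := tail_mono hsum h m
    have h4 := tail_mono hsum.symm h' m
    omega
  apply eq_of_sCount_eq hs hs'
  intro i hi
  obtain ⟨i', rfl⟩ : ∃ i', i = i' + 1 := ⟨i-1, by omega⟩
  have e1 := hA (i'+1)
  have e2 := hA i'
  rw [Finset.sum_Icc_succ_top (by omega : 1 ≤ i'+1), Finset.sum_Icc_succ_top (by omega : 1 ≤ i'+1)] at e1
  omega



lemma card_filter_cons (a : ℕ) (t : Multiset ℕ) (p : ℕ → Prop) [DecidablePred p] :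
    Multiset.card ((a ::ₘ t).filter p)
      = Multiset.card (t.filter p) + (if p a then 1 else 0) := by
  rw [← Multiset.countP_eq_card_filter, ← Multiset.countP_eq_card_filter,
    Multiset.countP_cons]

lemma map_sum_mod_two (s : Multiset ℕ) (f : ℕ → ℕ) :
    (s.map f).sum % 2 = (Multiset.card (s.filter (fun a => f a % 2 = 1))) % 2 := by
  induction s using Multiset.induction with
  | empty => rfl
  | cons a t ih =>
    rw [Multiset.map_cons, Multiset.sum_cons, card_filter_cons]
    by_cases h : f a % 2 = 1 <;> simp only [h, if_true, if_false] <;> omega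

lemma card_filter_split (s : Multiset ℕ) (p q : ℕ → Prop) [DecidablePred p] [DecidablePred q] :
    Multiset.card (s.filter p)
      = Multiset.card (s.filter (fun a => p a ∧ q a))
        + Multiset.card (s.filter (fun a => p a ∧ ¬ q a)) := by
  induction s using Multiset.induction with
  | empty => rfl
  | cons a t ih =>
    rw [card_filter_cons, card_filter_cons, card_filter_cons]
    by_cases hp : p a <;> by_cases hq : q a <;>
      simp only [hp, hq, true_and, false_and, and_true, and_false, not_true, not_false_iff,
        if_true, if_false] <;> omega

lemma even_card_of_even_counts {s : Multiset ℕ} (h : ∀ v, Even (s.count v)) :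
    Even (Multiset.card s) := by
  rw [← Multiset.toFinset_sum_count_eq]
  rw [Nat.even_iff, Finset.sum_nat_mod]
  have : ∀ v ∈ s.toFinset, s.count v % 2 = 0 := by
    intro v _; exact Nat.even_iff.1 (h v)
  rw [Finset.sum_congr rfl this]
  simp

lemma even_card_filter_even {s : Multiset ℕ} (ho : IsOrthogonal s)
    (q : ℕ → Prop) [DecidablePred q] :
    Even (Multiset.card (s.filter (fun a => a % 2 = 0 ∧ q a))) := by
  apply even_card_of_even_counts
  intro v
  rw [Multiset.count_filter]
  by_cases h : v % 2 = 0 ∧ q v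
  · simp only [h, if_true]; exact ho v h.1
  · simp [h]

lemma break_parity {c : Multiset ℕ} (ho : IsOrthogonal c) {val : ℕ} (hval : 1 ≤ val) :
    topSum c (sCount c val) % 2 = sCount c val % 2 := by
  rcases le_or_gt val (c.sum + 1) with hv | hv
  · obtain ⟨b, rfl⟩ : ∃ b, val = b + 1 := ⟨val - 1, by omega⟩
    have hb : b ≤ c.sum := by omega
    rw [topSum_sCount_eq c hb]
    have hpar := map_sum_mod_two c (fun a => a - b)
    have hE : Even (Multiset.card (c.filter (fun a => a % 2 = 0 ∧ b + 1 ≤ a))) :=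
      even_card_filter_even ho _
    have hsplit := card_filter_split c (fun a => b + 1 ≤ a) (fun a => a % 2 = 0)
    have hsc : sCount c (b+1) = Multiset.card (c.filter (fun a => b + 1 ≤ a)) := rfl
    have hcomm : c.filter (fun a => b+1 ≤ a ∧ a % 2 = 0)
        = c.filter (fun a => a % 2 = 0 ∧ b+1 ≤ a) :=
      Multiset.filter_congr (fun a _ => and_comm)
    rw [hcomm] at hsplit
    rcases Nat.mod_two_eq_zero_or_one b with hb2 | hb2
    · -- b even, val odd : (a-b) odd ↔ (b+1 ≤ a ∧ a odd)
      have hcg : c.filter (fun a => (a - b) % 2 = 1)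
          = c.filter (fun a => b + 1 ≤ a ∧ ¬ a % 2 = 0) := by
        apply Multiset.filter_congr
        intro a _; constructor <;> intro hh <;> omega
      rw [hcg] at hpar
      rw [Nat.even_iff] at hE
      have hmul : sCount c (b+1) * b % 2 = 0 := by
        rcases Nat.mod_two_eq_zero_or_one (sCount c (b+1)) with h1 | h1 <;>
        · rw [Nat.mul_mod, h1, hb2]
      omega
    · -- b odd, val even : (a-b) odd ↔ (b+1 ≤ a ∧ a even)
      have hcg : c.filter (fun a => (a - b) % 2 = 1)
          = c.filter (fun a => a % 2 = 0 ∧ b + 1 ≤ a) := by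
        apply Multiset.filter_congr
        intro a _; constructor <;> intro hh <;> omega
      rw [hcg] at hpar
      rw [Nat.even_iff] at hE
      have hmul : sCount c (b+1) * b % 2 = sCount c (b+1) % 2 := by
        rw [Nat.mul_mod, hb2, Nat.mul_one]
        omega
      omega
  · have h0 : sCount c val = 0 := by
      unfold sCount; rw [Multiset.card_eq_zero, Multiset.filter_eq_nil]
      intro a ha; have := mem_le_sum ha; omega
    rw [h0]
    unfold topSum
    simp



lemma surgery_orth {c : Multiset ℕ} {val : ℕ} (ho : IsOrthogonal c)
    (hv2 : 2 ≤ val) (hve : val % 2 = 0) (h2 : 2 ≤ c.count val) :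
    IsOrthogonal ((val+1) ::ₘ (val-1) ::ₘ ((c.erase val).erase val)) := by
  intro a ha
  have hne1 : a ≠ val + 1 := by omega
  have hne2 : a ≠ val - 1 := by omega
  rw [Multiset.count_cons, Multiset.count_cons, if_neg hne1, if_neg hne2]
  by_cases h : a = val
  · subst h
    have e1 : ((c.erase a).erase a).count a = (c.erase a).count a - 1 :=
      Multiset.count_erase_self _ _
    have e2 : (c.erase a).count a = c.count a - 1 := Multiset.count_erase_self _ _
    have he := ho a ha
    rw [Nat.even_iff] at he ⊢
    omega
  · have e1 : ((c.erase val).erase val).count a = (c.erase val).count a :=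
      Multiset.count_erase_of_ne h _
    have e2 : (c.erase val).count a = c.count a := Multiset.count_erase_of_ne h _
    have he := ho a ha
    rw [Nat.even_iff] at he ⊢
    omega

lemma surgery_pos {c : Multiset ℕ} {val : ℕ} (hc : ∀ a ∈ c, 0 < a) (hv2 : 2 ≤ val) :
    ∀ a ∈ ((val+1) ::ₘ (val-1) ::ₘ ((c.erase val).erase val)), 0 < a := by
  intro a hmem
  rw [Multiset.mem_cons] at hmem
  rcases hmem with rfl | hmem
  · omega
  rw [Multiset.mem_cons] at hmem
  rcases hmem with rfl | hmem
  · omega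
  · exact hc a (Multiset.mem_of_mem_erase (Multiset.mem_of_mem_erase hmem))



lemma sCount_erase {s : Multiset ℕ} {a : ℕ} (h : a ∈ s) (i : ℕ) :
    sCount s i = sCount (s.erase a) i + (if i ≤ a then 1 else 0) := by
  conv_lhs => rw [← Multiset.cons_erase h]
  rw [sCount_cons]

lemma two_mul_le_sum {c : Multiset ℕ} {val : ℕ} (h2 : 2 ≤ c.count val) :
    2 * val ≤ c.sum := by
  have hm1 : val ∈ c := Multiset.count_pos.1 (by omega)
  have hm2 : val ∈ c.erase val := by
    rw [← Multiset.count_pos, Multiset.count_erase_self]; omega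
  have e1 : c.sum = val + (c.erase val).sum := by
    conv_lhs => rw [← Multiset.cons_erase hm1]
    rw [Multiset.sum_cons]
  have e2 : (c.erase val).sum = val + ((c.erase val).erase val).sum := by
    conv_lhs => rw [← Multiset.cons_erase hm2]
    rw [Multiset.sum_cons]
  omega

lemma surgery_sum {c : Multiset ℕ} {val : ℕ} (hval : 1 ≤ val) (h2 : 2 ≤ c.count val) :
    ((val+1) ::ₘ (val-1) ::ₘ ((c.erase val).erase val)).sum = c.sum := by
  have hm1 : val ∈ c := Multiset.count_pos.1 (by omega)
  have hm2 : val ∈ c.erase val := by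
    rw [← Multiset.count_pos, Multiset.count_erase_self]; omega
  have e1 : c.sum = val + (c.erase val).sum := by
    conv_lhs => rw [← Multiset.cons_erase hm1]
    rw [Multiset.sum_cons]
  have e2 : (c.erase val).sum = val + ((c.erase val).erase val).sum := by
    conv_lhs => rw [← Multiset.cons_erase hm2]
    rw [Multiset.sum_cons]
  rw [Multiset.sum_cons, Multiset.sum_cons]
  omega

lemma surgery_topSum {c : Multiset ℕ} {val : ℕ} (hval : 1 ≤ val) (h2 : 2 ≤ c.count val)
    (k : ℕ) :
    topSum ((val+1) ::ₘ (val-1) ::ₘ ((c.erase val).erase val)) k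
      + (if sCount c val ≤ k then 1 else 0)
    = topSum c k + (if sCount c (val+1) < k then 1 else 0) := by
  have hm1 : val ∈ c := Multiset.count_pos.1 (by omega)
  have hm2 : val ∈ c.erase val := by
    rw [← Multiset.count_pos, Multiset.count_erase_self]; omega
  have hsum : ((val+1) ::ₘ (val-1) ::ₘ ((c.erase val).erase val)).sum = c.sum :=
    surgery_sum hval h2
  have hvS : val + 1 ≤ c.sum := by have := two_mul_le_sum h2; omega
  have key : ∀ i, min k (sCount ((val+1) ::ₘ (val-1) ::ₘ ((c.erase val).erase val)) i)
        + (if sCount c val ≤ k ∧ i = val then 1 else 0)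
      = min k (sCount c i) + (if sCount c (val+1) < k ∧ i = val + 1 then 1 else 0) := by
    intro i
    have f1 := sCount_erase hm1 i
    have f2 := sCount_erase hm2 i
    have fv1 : sCount c val = sCount ((c.erase val).erase val) val + 2 := by
      have g1 := sCount_erase hm1 val
      have g2 := sCount_erase hm2 val
      rw [if_pos (le_refl val)] at g1 g2
      omega
    have fv2 : sCount c (val+1) = sCount ((c.erase val).erase val) (val+1) := by
      have g1 := sCount_erase hm1 (val+1)
      have g2 := sCount_erase hm2 (val+1)
      rw [if_neg (by omega : ¬ val + 1 ≤ val)] at g1 g2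
      omega
    have e1 : sCount ((val+1) ::ₘ (val-1) ::ₘ ((c.erase val).erase val)) i
        = sCount ((c.erase val).erase val) i
          + ((if i ≤ val - 1 then 1 else 0) + (if i ≤ val + 1 then 1 else 0)) := by
      rw [sCount_cons, sCount_cons]; omega
    rcases Nat.lt_trichotomy i val with hi | hi | hi
    · rw [if_neg (by omega : ¬ (sCount c val ≤ k ∧ i = val)),
        if_neg (by omega : ¬ (sCount c (val+1) < k ∧ i = val + 1))]
      rw [if_pos (by omega : i ≤ val)] at f1 f2
      rw [if_pos (by omega : i ≤ val - 1), if_pos (by omega : i ≤ val + 1)] at e1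
      omega
    · rw [hi] at f1 f2 e1 ⊢
      rw [if_neg (by omega : ¬ (sCount c (val+1) < k ∧ val = val + 1))]
      rw [if_pos (le_refl val)] at f1 f2
      rw [if_neg (by omega : ¬ val ≤ val - 1), if_pos (by omega : val ≤ val + 1)] at e1
      by_cases hk : sCount c val ≤ k
      · rw [if_pos (by exact ⟨hk, rfl⟩)]; omega
      · rw [if_neg (by tauto)]; omega
    · rcases Nat.lt_or_ge (val + 1) i with hi2 | hi2
      · rw [if_neg (by omega : ¬ (sCount c val ≤ k ∧ i = val)),
          if_neg (by omega : ¬ (sCount c (val+1) < k ∧ i = val + 1))]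
        rw [if_neg (by omega : ¬ i ≤ val)] at f1 f2
        rw [if_neg (by omega : ¬ i ≤ val - 1), if_neg (by omega : ¬ i ≤ val + 1)] at e1
        omega
      · have hieq : i = val + 1 := by omega
        rw [hieq] at f1 f2 e1 ⊢
        rw [if_neg (by omega : ¬ (sCount c val ≤ k ∧ val + 1 = val))]
        rw [if_neg (by omega : ¬ val + 1 ≤ val)] at f1 f2
        rw [if_neg (by omega : ¬ val + 1 ≤ val - 1), if_pos (le_refl (val+1))] at e1
        by_cases hk : sCount c (val+1) < k
        · rw [if_pos (by exact ⟨hk, rfl⟩)]; omega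
        · rw [if_neg (by tauto)]; omega
  unfold topSum
  rw [hsum]
  have hsum1 := Finset.sum_congr rfl (fun i (_ : i ∈ Finset.Icc 1 c.sum) => key i)
  rw [Finset.sum_add_distrib, Finset.sum_add_distrib] at hsum1
  have hmem : val ∈ Finset.Icc 1 c.sum := by rw [Finset.mem_Icc]; omega
  have hmem2 : val + 1 ∈ Finset.Icc 1 c.sum := by rw [Finset.mem_Icc]; omega
  have ind1 : (∑ i ∈ Finset.Icc 1 c.sum, if sCount c val ≤ k ∧ i = val then 1 else 0)
      = (if sCount c val ≤ k then 1 else 0) := by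
    by_cases hP : sCount c val ≤ k
    · rw [if_pos hP]
      rw [Finset.sum_congr rfl (fun i _ => if_congr (and_iff_right hP) rfl rfl)]
      rw [Finset.sum_ite_eq' (Finset.Icc 1 c.sum) val (fun _ => (1:ℕ)), if_pos hmem]
    · rw [if_neg hP]
      apply Finset.sum_eq_zero
      intro i _
      rw [if_neg (by tauto)]
  have ind2 : (∑ i ∈ Finset.Icc 1 c.sum, if sCount c (val+1) < k ∧ i = val + 1 then 1 else 0)
      = (if sCount c (val+1) < k then 1 else 0) := by
    by_cases hP : sCount c (val+1) < k
    · rw [if_pos hP]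
      rw [Finset.sum_congr rfl (fun i _ => if_congr (and_iff_right hP) rfl rfl)]
      rw [Finset.sum_ite_eq' (Finset.Icc 1 c.sum) (val+1) (fun _ => (1:ℕ)), if_pos hmem2]
    · rw [if_neg hP]
      apply Finset.sum_eq_zero
      intro i _
      rw [if_neg (by tauto)]
  rw [ind1, ind2] at hsum1
  omega



lemma collapse_special {q : Multiset ℕ} {mo : ℕ} {c : Multiset ℕ}
    (hq : ∀ a ∈ q, 0 < a)
    (hc : IsSOCollapse (transpose ((2*mo+1) ::ₘ (q + q))) c) :
    IsOrthogonal (transpose c) := by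
  obtain ⟨⟨hcpos, hcsum⟩, hcorth, hcdom, hcmax⟩ := hc
  have hPpos : ∀ a ∈ ((2*mo+1) ::ₘ (q + q)), 0 < a := by
    intro a ha
    rw [Multiset.mem_cons] at ha
    rcases ha with rfl | ha
    · omega
    · rw [Multiset.mem_add] at ha
      rcases ha with ha | ha <;> exact hq a ha
  have hQsum : (transpose ((2*mo+1) ::ₘ (q + q))).sum = ((2*mo+1) ::ₘ (q + q)).sum :=
    transpose_sum _
  have hSodd : ((2*mo+1) ::ₘ (q + q)).sum % 2 = 1 := by
    rw [Multiset.sum_cons, Multiset.sum_add]; omega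
  have hscP : ∀ j, sCount ((2*mo+1) ::ₘ (q + q)) j
      = (if j ≤ 2*mo+1 then 1 else 0) + 2 * sCount q j := by
    intro j; rw [sCount_cons, sCount_add]; omega
  have fdiff : ∀ k, 1 ≤ k → topSum (transpose ((2*mo+1) ::ₘ (q + q))) k
      = topSum (transpose ((2*mo+1) ::ₘ (q + q))) (k-1) + sCount ((2*mo+1) ::ₘ (q + q)) k := by
    intro k hk
    rw [topSum_succ _ hk, sCount_transpose_transpose hk]
  have fparity : ∀ k, topSum (transpose ((2*mo+1) ::ₘ (q + q))) k % 2 = min (2*mo+1) k % 2 := by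
    intro k
    rw [topSum_transpose hPpos k, Multiset.map_cons, Multiset.sum_cons,
      Multiset.map_add, Multiset.sum_add]
    omega
  -- main goal
  intro v hv
  rcases Nat.eq_zero_or_pos v with rfl | hv1
  · rw [Multiset.count_eq_zero.2 (fun hmem => by have := transpose_pos 0 hmem; omega)]
    exact Even.zero
  suffices hpar : sCount (transpose c) v % 2 = sCount (transpose c) (v+1) % 2 by
    have hcc := count_add_sCount (transpose c) v
    have hanti : sCount (transpose c) (v+1) ≤ sCount (transpose c) v :=
      sCount_antitone (by omega)
    rw [Nat.even_iff]; omega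
  by_contra hne
  set u := sCount (transpose c) v with hu
  set w := sCount (transpose c) (v+1) with hw
  have hanti : w ≤ u := sCount_antitone (by omega)
  have hu1 : 1 ≤ u := by
    rcases Nat.eq_zero_or_pos u with h0 | h; · omega
    · exact h
  -- card of c is odd
  have hcard_odd : Multiset.card c % 2 = 1 := by
    have hsplit := card_filter_split c (fun a => 1 ≤ a) (fun a => a % 2 = 0)
    have hall : c.filter (fun a => 1 ≤ a) = c :=
      Multiset.filter_eq_self.2 (fun a ha => hcpos a ha)
    have hE : Even (Multiset.card (c.filter (fun a => a % 2 = 0 ∧ 1 ≤ a))) :=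
      even_card_filter_even hcorth _
    have hcomm : c.filter (fun a => 1 ≤ a ∧ a % 2 = 0)
        = c.filter (fun a => a % 2 = 0 ∧ 1 ≤ a) :=
      Multiset.filter_congr (fun a _ => and_comm)
    have hsum_par := map_sum_mod_two c id
    have hid : c.map id = c := Multiset.map_id c
    have hodd : c.filter (fun a => id a % 2 = 1) = c.filter (fun a => 1 ≤ a ∧ ¬ a % 2 = 0) :=
      Multiset.filter_congr (fun a _ => by simp only [id]; constructor <;> intro <;> omega)
    rw [hid, hodd] at hsum_par
    rw [hall, hcomm] at hsplit
    rw [Nat.even_iff] at hE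
    have : c.sum % 2 = 1 := by rw [hcsum, hQsum]; exact hSodd
    omega
  -- exclude w = 0
  have hw1 : 1 ≤ w := by
    by_contra hw0
    have hwz : w = 0 := by omega
    have hcard1 : sCount c 1 = Multiset.card c := by
      unfold sCount
      congr 1
      exact Multiset.filter_eq_self.2 (fun a ha => hcpos a ha)
    have hle : Multiset.card c ≤ v := by
      by_contra hgt
      have : (1:ℕ) ≤ sCount (transpose c) (v+1) :=
        (galois (q := c) (i := 1) (v := v+1) (le_refl 1) (by omega)).2 (by omega)
      omega
    have hge : v ≤ Multiset.card c := by
      have := (galois hu1 hv1).1 (le_refl u)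
      have h2 : sCount c u ≤ sCount c 1 := sCount_antitone hu1
      omega
    omega
  -- galois facts
  have g2 : sCount c (u+1) < v := by
    by_contra hge
    have := (galois (by omega : 1 ≤ u+1) hv1).2 (by omega : v ≤ sCount c (u+1))
    omega
  have g6 : sCount c u = v := by
    have hge : v ≤ sCount c u := (galois hu1 hv1).1 (le_refl u)
    have hle : sCount c u ≤ v := by
      by_contra hgt
      have := (galois hu1 (by omega : 1 ≤ v+1)).2 (by omega : v+1 ≤ sCount c u)
      omega
    omega
  have g4 : sCount c (w+1) = v := by
    have hge : v ≤ sCount c (w+1) := (galois (by omega : 1 ≤ w+1) hv1).1 (by omega : w+1 ≤ u)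
    have hle : sCount c (w+1) ≤ v := by
      by_contra hgt
      have := (galois (by omega : 1 ≤ w+1) (by omega : 1 ≤ v+1)).2
        (by omega : v+1 ≤ sCount c (w+1))
      omega
    omega
  have g3 : v+1 ≤ sCount c w := (galois hw1 (by omega : 1 ≤ v+1)).1 (le_refl w)
  -- choose the even value val
  obtain ⟨val, hv2, hve, hcnt, hsve, hgap⟩ :
      ∃ val, 2 ≤ val ∧ val % 2 = 0 ∧ 2 ≤ c.count val ∧ sCount c val % 2 = 0 ∧
        sCount c (val+1) + 2 ≤ sCount c val := by
    by_cases hue : u % 2 = 0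
    · refine ⟨u, by omega, hue, ?_, by omega, ?_⟩
      · have hcc := count_add_sCount c u
        have hcount1 : 1 ≤ c.count u := by omega
        have hev := hcorth u hue
        rw [Nat.even_iff] at hev
        omega
      · have hcc := count_add_sCount c u
        have hev := hcorth u hue
        rw [Nat.even_iff] at hev
        omega
    · have hwe : w % 2 = 0 := by omega
      refine ⟨w, by omega, hwe, ?_, ?_, ?_⟩ <;>
      · have hcc := count_add_sCount c w
        have hev := hcorth w hwe
        rw [Nat.even_iff] at hev
        omega
  -- the strict gap
  have hstrict : ∀ k, sCount c (val+1) < k → k < sCount c val →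
      topSum c k < topSum (transpose ((2*mo+1) ::ₘ (q + q))) k := by
    intro k h1 h2
    have hk1 : 1 ≤ k := by omega
    have hpk : sCount (transpose c) k = val := by
      have hge : val ≤ sCount (transpose c) k :=
        (galois (by omega : 1 ≤ val) hk1).2 (by omega)
      have hle : sCount (transpose c) k ≤ val := by
        by_contra hgt
        have := (galois (by omega : 1 ≤ val+1) hk1).1 (by omega : val+1 ≤ sCount (transpose c) k)
        omega
      omega
    rcases le_or_gt k (2*mo+1) with hkm | hkm
    · by_contra hge
      push_neg at hge
      have hEq : topSum c k = topSum (transpose ((2*mo+1) ::ₘ (q + q))) k :=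
        le_antisymm (hcdom k) hge
      have hpk1 : sCount (transpose c) (k+1) = val := by
        have hge' : val ≤ sCount (transpose c) (k+1) :=
          (galois (by omega : 1 ≤ val) (by omega : 1 ≤ k+1)).2 (by omega)
        have hle' : sCount (transpose c) (k+1) ≤ val := by
          by_contra hgt
          have := (galois (by omega : 1 ≤ val+1) (by omega : 1 ≤ k+1)).1
            (by omega : val+1 ≤ sCount (transpose c) (k+1))
          omega
        omega
      have gdiff : topSum c k = topSum c (k-1) + val := by
        rw [topSum_succ c hk1, hpk]
      have gdiff2 : topSum c (k+1) = topSum c k + val := by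
        have := topSum_succ c (by omega : 1 ≤ k+1)
        rw [(by omega : k + 1 - 1 = k)] at this
        rw [this, hpk1]
      have fdk := fdiff k hk1
      have fdk1 := fdiff (k+1) (by omega)
      rw [(by omega : k + 1 - 1 = k)] at fdk1
      have hdom1 := hcdom (k-1)
      have hdom2 := hcdom (k+1)
      have hPk := hscP k
      have hPk1 := hscP (k+1)
      have hPanti : sCount q (k+1) ≤ sCount q k := sCount_antitone (by omega)
      rw [if_pos hkm] at hPk
      have hite : (if k + 1 ≤ 2*mo+1 then (1:ℕ) else 0) ≤ 1 := by split_ifs <;> omega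
      omega
    · -- k > m : parity argument
      have hchain : ∀ j, k ≤ j → j ≤ sCount c val → topSum c j % 2 = topSum c k % 2 := by
        intro j hj1 hj2
        induction j, hj1 using Nat.le_induction with
        | base => rfl
        | succ j hj ih =>
          have hjv : sCount (transpose c) (j+1) = val := by
            have hge' : val ≤ sCount (transpose c) (j+1) :=
              (galois (by omega : 1 ≤ val) (by omega : 1 ≤ j+1)).2 (by omega)
            have hle' : sCount (transpose c) (j+1) ≤ val := by
              by_contra hgt
              have := (galois (by omega : 1 ≤ val+1) (by omega : 1 ≤ j+1)).1
                (by omega : val+1 ≤ sCount (transpose c) (j+1))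
              omega
            omega
          have hstep := topSum_succ c (by omega : 1 ≤ j+1)
          rw [(by omega : j + 1 - 1 = j), hjv] at hstep
          have := ih (by omega)
          omega
      have hend := hchain (sCount c val) (by omega) (le_refl _)
      have hbp := break_parity hcorth (by omega : 1 ≤ val)
      have hfp := fparity k
      have hdomk := hcdom k
      have hminm : min (2*mo+1) k % 2 = 1 := by omega
      omega
  -- contradiction with maximality
  have hc''sum : ((val+1) ::ₘ (val-1) ::ₘ ((c.erase val).erase val)).sum
      = (transpose ((2*mo+1) ::ₘ (q + q))).sum := by
    rw [surgery_sum (by omega) hcnt, hcsum]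
  have hd : domLE ((val+1) ::ₘ (val-1) ::ₘ ((c.erase val).erase val))
      (transpose ((2*mo+1) ::ₘ (q + q))) := by
    intro k
    have hs := surgery_topSum (by omega : 1 ≤ val) hcnt k
    by_cases h1 : sCount c (val+1) < k
    · by_cases h2 : k < sCount c val
      · have hst := hstrict k h1 h2
        rw [if_pos h1, if_neg (by omega : ¬ sCount c val ≤ k)] at hs
        omega
      · rw [if_pos h1, if_pos (by omega : sCount c val ≤ k)] at hs
        have := hcdom k
        omega
    · rw [if_neg h1, if_neg (by omega : ¬ sCount c val ≤ k)] at hs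
      have := hcdom k
      omega
  have hmax := hcmax _ ⟨surgery_pos hcpos hv2, hc''sum⟩ (surgery_orth hcorth hv2 hve hcnt) hd
  have hbad := hmax (sCount c (val+1) + 1)
  have hs := surgery_topSum (by omega : 1 ≤ val) hcnt (sCount c (val+1) + 1)
  rw [if_neg (by omega : ¬ sCount c val ≤ sCount c (val+1) + 1),
    if_pos (by omega : sCount c (val+1) < sCount c (val+1) + 1)] at hs
  omega




lemma half_sum (p : Multiset ℕ) :
    2 * (p.map (fun b => b / 2)).sum + Multiset.card (p.filter (fun a => a % 2 = 1))
      = p.sum := by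
  induction p using Multiset.induction with
  | empty => rfl
  | cons a t ih =>
    rw [Multiset.map_cons, Multiset.sum_cons, Multiset.sum_cons, card_filter_cons]
    by_cases h : a % 2 = 1 <;> simp only [h, if_true, if_false] <;> omega

lemma pOne_sum (p : Multiset ℕ) : (pOne p).sum = (p.map (fun b => b / 2)).sum := by
  unfold pOne
  rw [transpose_sum]
  have hsplit := Multiset.filter_add_not (fun x => 0 < x) (p.map (fun b => b / 2))
  have : ((p.map (fun b => b / 2)).filter (fun x => ¬ 0 < x)).sum = 0 := by
    apply Multiset.sum_eq_zero
    intro x hx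
    have := (Multiset.mem_filter.1 hx).2
    omega
  have hsum := congrArg Multiset.sum hsplit
  rw [Multiset.sum_add, this] at hsum
  omega


/-- for a symplectic partition `p` of `2n`, the number of odd parts is even,
`2n* = Σ_{b_i odd} a_i`, `P = [p₁ p₁ (2n*+1)]` is an orthogonal partition of `2n+1`, and
`P^{SO_{2n+1}} = ((p^+)_{SO_{2n+1}})^t` iff `(P^t)_{SO_{2n+1}} = (p^+)_{SO_{2n+1}}`. -/
theorem expansion_iff_collapse_SO_odd (n : ℕ) (p : Multiset ℕ)
    (hp : IsPartitionOf p (2 * n)) (hsymp : IsSymplectic p) :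
    Even (oddMult p) ∧ 2 * nStar p = oddMult p ∧
      IsPartitionOf ((2 * nStar p + 1) ::ₘ (pOne p + pOne p)) (2 * n + 1) ∧
      IsOrthogonal ((2 * nStar p + 1) ::ₘ (pOne p + pOne p)) ∧
      ∀ e c₁ c₂ : Multiset ℕ,
        IsSOOddExpansion ((2 * nStar p + 1) ::ₘ (pOne p + pOne p)) e →
        IsSOCollapse (pPlus p) c₁ →
        IsSOCollapse (transpose ((2 * nStar p + 1) ::ₘ (pOne p + pOne p))) c₂ →
        (e = transpose c₁ ↔ c₂ = c₁) := by
  have hparity := map_sum_mod_two p id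
  rw [Multiset.map_id] at hparity
  have hfc : p.filter (fun a => id a % 2 = 1) = p.filter (fun a => a % 2 = 1) :=
    Multiset.filter_congr (fun a _ => by simp [id])
  rw [hfc] at hparity
  have hpsum : p.sum = 2 * n := hp.2
  have heven : Even (oddMult p) := by
    rw [Nat.even_iff]
    unfold oddMult
    omega
  have h2n : 2 * nStar p = oddMult p := by
    rw [Nat.even_iff] at heven
    unfold nStar
    omega
  have hhalf := half_sum p
  have hP1sum := pOne_sum p
  have hPsum : ((2 * nStar p + 1) ::ₘ (pOne p + pOne p)).sum = 2 * n + 1 := by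
    rw [Multiset.sum_cons, Multiset.sum_add, hP1sum]
    unfold oddMult at h2n
    omega
  have hPpos : ∀ a ∈ ((2 * nStar p + 1) ::ₘ (pOne p + pOne p)), 0 < a := by
    intro a ha
    rw [Multiset.mem_cons] at ha
    rcases ha with rfl | ha
    · omega
    · rw [Multiset.mem_add] at ha
      rcases ha with ha | ha <;> exact transpose_pos a ha
  have hPorth : IsOrthogonal ((2 * nStar p + 1) ::ₘ (pOne p + pOne p)) := by
    intro a ha
    rw [Multiset.count_cons, if_neg (by omega : ¬ a = 2 * nStar p + 1),
      Multiset.count_add]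
    exact ⟨(pOne p).count a, by omega⟩
  refine ⟨heven, h2n, ⟨hPpos, hPsum⟩, hPorth, ?_⟩
  intro e c₁ c₂ he hc1 hc2
  have hspecial : IsOrthogonal (transpose c₂) := collapse_special transpose_pos hc2
  obtain ⟨⟨hc2pos, hc2sum⟩, hc2orth, hc2dom, hc2max⟩ := hc2
  obtain ⟨⟨hepos, hesum⟩, heorth, hetorth, hedom, hemin⟩ := he
  have hQsumP : (transpose ((2 * nStar p + 1) ::ₘ (pOne p + pOne p))).sum
      = ((2 * nStar p + 1) ::ₘ (pOne p + pOne p)).sum := transpose_sum _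
  -- P ≤ transpose c₂
  have hPle : domLE ((2 * nStar p + 1) ::ₘ (pOne p + pOne p)) (transpose c₂) := by
    have h := domLE_transpose hc2pos transpose_pos hc2sum hc2dom
    rwa [transpose_transpose hPpos] at h
  -- e ≤ transpose c₂
  have he_le : domLE e (transpose c₂) := by
    apply hemin (transpose c₂)
    · exact ⟨transpose_pos, by rw [transpose_sum, hc2sum, hQsumP]⟩
    · exact hspecial
    · rw [transpose_transpose hc2pos]; exact hc2orth
    · exact hPle
  -- transpose e ≤ c₂
  have hte_le : domLE (transpose e) c₂ := by
    apply hc2max (transpose e)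
    · exact ⟨transpose_pos, by rw [transpose_sum, hesum, hQsumP]⟩
    · exact hetorth
    · exact domLE_transpose hPpos hepos hesum.symm hedom
  -- transpose c₂ ≤ e
  have htc2_le : domLE (transpose c₂) e := by
    have h := domLE_transpose transpose_pos hc2pos
      (by rw [transpose_sum, hesum, hc2sum, hQsumP]) hte_le
    rwa [transpose_transpose hepos] at h
  have heq : e = transpose c₂ :=
    domLE_antisymm hepos transpose_pos
      (by rw [transpose_sum, hesum, hc2sum, hQsumP]) he_le htc2_le
  have hc1pos : ∀ a ∈ c₁, 0 < a := hc1.1.1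
  constructor
  · intro h
    have h' : transpose c₂ = transpose c₁ := heq.symm.trans h
    calc c₂ = transpose (transpose c₂) := (transpose_transpose hc2pos).symm
      _ = transpose (transpose c₁) := by rw [h']
      _ = c₁ := transpose_transpose hc1pos
  · intro h
    rw [heq, h]

end JiangWF
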